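/- Let D ≥ 1 and let V be an affine sub-lattice of ℤ^D of rank k. Then there exists a subset I = {i₁ < ... < i_k} ⊆ {1,...,D} such that for every non-zero Laurent polynomial P in k+1 variables over ℚ, there is a finite union of affine sub-lattices of V each of rank < k whose complement in V contains no point c with P(A, A^{c_{i₁}}, ..., A^{c_{i_k}}) = 0 (as a Laurent polynomial in A). -/

import Mathlib

open scoped BigOperators

/-- `S` is an affine sub-lattice of `ℤ^D` of rank `k`: a coset `v + L` of a subgroup `L`
of `ℤ^D` whose rank (as a `ℤ`-module) is `k`. -/
def IsAffineSublatticeOfRank (D k : ℕ) (S : Set (Fin D → ℤ)) : Prop :=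
  ∃ (v : Fin D → ℤ) (L : AddSubgroup (Fin D → ℤ)),
    Module.finrank ℤ (AddSubgroup.toIntSubmodule L) = k ∧
    S = (fun x => v + x) '' (L : Set (Fin D → ℤ))

/-- Substitution of `X_j = A^{n_j}` in a Laurent polynomial `P` in `k+1` variables
(the variable indexed by `0` being `A` itself), producing a Laurent polynomial in `A`. -/
noncomputable def laurentSubst {k : ℕ} (P : AddMonoidAlgebra ℚ (Fin (k + 1) → ℤ))
    (n : Fin k → ℤ) : AddMonoidAlgebra ℚ ℤ :=
  AddMonoidAlgebra.mapDomain (fun m => m 0 + ∑ j : Fin k, m j.succ * n j) P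


/-- kernel of a functional not vanishing on M has smaller rank -/
lemma rankKer {D k : ℕ} (M : Submodule ℤ (Fin D → ℤ)) (hM : Module.finrank ℤ M = k)
    (F : (Fin D → ℤ) →ₗ[ℤ] ℤ) (x0 : Fin D → ℤ) (hx0 : x0 ∈ M) (hFx0 : F x0 ≠ 0) :
    Module.finrank ℤ ↥(M ⊓ LinearMap.ker F) < k := by
  set N := M ⊓ LinearMap.ker F with hN
  set r := Module.finrank ℤ ↥N with hr
  let w : Module.Basis (Fin r) ℤ ↥N := Module.finBasis ℤ ↥N
  -- the coerced family in ℤ^D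
  have liw : LinearIndependent ℤ (fun i => ((w i : ↥N) : Fin D → ℤ)) := by
    have := w.linearIndependent.map' N.subtype (Submodule.ker_subtype N)
    exact this
  -- extended family
  let h : Fin (r + 1) → (Fin D → ℤ) := Fin.cons x0 (fun i => ((w i : ↥N) : Fin D → ℤ))
  have lih : LinearIndependent ℤ h := by
    rw [Fintype.linearIndependent_iff]
    intro c hc
    have hsum : c 0 • h 0 + ∑ i : Fin r, c i.succ • h i.succ = 0 := by
      rwa [← Fin.sum_univ_succ (fun i => c i • h i)]
    have h0 : h 0 = x0 := Fin.cons_zero _ _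
    have hsucc : ∀ i : Fin r, h i.succ = ((w i : ↥N) : Fin D → ℤ) := fun i => Fin.cons_succ _ _ _
    have hFw : ∀ i : Fin r, F ((w i : ↥N) : Fin D → ℤ) = 0 := by
      intro i
      have : ((w i : ↥N) : Fin D → ℤ) ∈ LinearMap.ker F := ((w i).2 : _ ∈ M ⊓ LinearMap.ker F).2
      exact this
    have hF : c 0 * F x0 = 0 := by
      have := congrArg F hsum
      simp only [map_add, map_sum, map_smul, map_zero, h0, hsucc, hFw, smul_eq_mul,
        mul_zero, Finset.sum_const_zero, add_zero] at this
      exact this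
    have hc0 : c 0 = 0 := by
      rcases mul_eq_zero.mp hF with h' | h'
      · exact h'
      · exact absurd h' hFx0
    have hrest : ∑ i : Fin r, c i.succ • ((w i : ↥N) : Fin D → ℤ) = 0 := by
      have := hsum
      rw [hc0, zero_smul, zero_add] at this
      simpa only [hsucc] using this
    have := (Fintype.linearIndependent_iff.mp liw) (fun i => c i.succ) hrest
    intro i
    refine Fin.cases hc0 (fun j => this j) i
  -- view in M
  have hmem : ∀ i, h i ∈ M := by
    intro i
    refine Fin.cases (by simpa [h] using hx0) (fun j => ?_) i
    have : h j.succ = ((w j : ↥N) : Fin D → ℤ) := Fin.cons_succ _ _ _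
    rw [this]
    exact ((w j).2 : _ ∈ M ⊓ LinearMap.ker F).1
  let g : Fin (r + 1) → ↥M := fun i => ⟨h i, hmem i⟩
  have lig : LinearIndependent ℤ g := by
    apply LinearIndependent.of_comp M.subtype
    exact lih
  have hcard := lig.fintype_card_le_finrank
  rw [hM, Fintype.card_fin] at hcard
  omega

open Module Submodule

noncomputable def castL (D : ℕ) : (Fin D → ℤ) →ₗ[ℤ] (Fin D → ℚ) where
  toFun x i := (x i : ℚ)
  map_add' x y := by funext i; simp
  map_smul' c x := by funext i; simp

@[simp] lemma castL_apply (D : ℕ) (x : Fin D → ℤ) (i : Fin D) : castL D x i = (x i : ℚ) := rfl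

lemma castL_inj (D : ℕ) : Function.Injective (castL D) := by
  intro x y h
  funext i
  have h2 : ((x i : ℚ)) = y i := congrFun h i
  exact_mod_cast h2

lemma chooseIota {D k : ℕ} (M : Submodule ℤ (Fin D → ℤ)) (hM : Module.finrank ℤ M = k) :
    ∃ ι : Fin k → Fin D, StrictMono ι ∧
      ∀ a : Fin k → ℤ, a ≠ 0 → ∃ x ∈ M, (∑ j, a j * x (ι j)) ≠ 0 := by
  classical
  let b : Basis (Fin k) ℤ ↥M := (Module.finBasis ℤ ↥M).reindex (finCongr hM)
  let β : Fin k → (Fin D → ℚ) := fun s => castL D ((b s : ↥M) : Fin D → ℤ)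
  have liβZ : LinearIndependent ℤ β := by
    have h1 := b.linearIndependent.map' M.subtype (Submodule.ker_subtype M)
    have h2 := h1.map' (castL D) (LinearMap.ker_eq_bot.mpr (castL_inj D))
    exact h2
  have liβ : LinearIndependent ℚ β := (LinearIndependent.iff_fractionRing ℤ ℚ).mp liβZ
  let cols : Fin D → (Fin k → ℚ) := fun i s => β s i
  -- columns span everything
  have hspan : span ℚ (Set.range cols) = ⊤ := by
    by_contra hne
    obtain ⟨v, hv⟩ : ∃ v : Fin k → ℚ, v ∉ span ℚ (Set.range cols) := by
      by_contra h'
      push_neg at h'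
      exact hne (eq_top_iff.mpr fun x _ => h' x)
    set W := span ℚ (Set.range cols)
    have hv' : W.mkQ v ≠ 0 := by
      simpa [Submodule.Quotient.mk_eq_zero] using hv
    obtain ⟨ψ, hψ⟩ : ∃ ψ : Module.Dual ℚ ((Fin k → ℚ) ⧸ W), ψ (W.mkQ v) ≠ 0 := by
      by_contra h'
      push_neg at h'
      exact hv' ((Module.forall_dual_apply_eq_zero_iff ℚ _).mp h')
    let φ : Module.Dual ℚ (Fin k → ℚ) := ψ.comp W.mkQ
    have hφW : ∀ y ∈ W, φ y = 0 := by
      intro y hy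
      have h0 : W.mkQ y = 0 := by
        simpa [Submodule.mkQ_apply] using (Submodule.Quotient.mk_eq_zero W).mpr hy
      simp only [φ, LinearMap.comp_apply, h0]
      exact map_zero ψ
    let u : Fin k → ℚ := fun s => φ (Pi.single s 1)
    have hφeval : ∀ y : Fin k → ℚ, φ y = ∑ s, y s * u s := by
      intro y
      have hy : y = ∑ s, y s • (Pi.single s (1 : ℚ) : Fin k → ℚ) := by
        funext i
        simp [Finset.sum_apply, Pi.single_apply, Finset.sum_ite_eq']
      calc φ y = φ (∑ s, y s • (Pi.single s (1 : ℚ) : Fin k → ℚ)) := by rw [← hy]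
        _ = ∑ s, y s * u s := by simp [map_sum, map_smul, u, smul_eq_mul]
    have hucols : ∀ i, ∑ s, cols i s * u s = 0 := by
      intro i
      have := hφW (cols i) (subset_span ⟨i, rfl⟩)
      rwa [hφeval] at this
    have husum : ∑ s, u s • β s = 0 := by
      funext i
      have := hucols i
      simp only [Finset.sum_apply, Pi.smul_apply, smul_eq_mul, Pi.zero_apply]
      rw [← this]
      exact Finset.sum_congr rfl fun s _ => mul_comm _ _
    have hu0 := (Fintype.linearIndependent_iff.mp liβ) u husum
    have : φ v = 0 := by rw [hφeval]; simp [hu0]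
    exact hψ this
  -- choose an independent spanning subset of the columns
  obtain ⟨s, hs_sub, hs_span, hs_li⟩ := exists_linearIndependent ℚ (Set.range cols)
  rw [hspan] at hs_span
  haveI := hs_li.finite
  haveI : Fintype ↥s := Fintype.ofFinite _
  have hcard : Fintype.card ↥s = k := by
    have h1 : Fintype.card ↥s ≤ k := by
      have := hs_li.fintype_card_le_finrank
      rwa [Module.finrank_fin_fun] at this
    have h2 : k ≤ Fintype.card ↥s := by
      have h3 := finrank_span_le_card (R := ℚ) s
      rw [hs_span, finrank_top, Module.finrank_fin_fun, Set.toFinset_card] at h3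
      exact h3
    omega
  -- pick indices
  have hpick : ∀ y : ↥s, ∃ i : Fin D, cols i = y.1 := fun y => hs_sub y.2
  choose pickF hpick_eq using hpick
  have pick_inj : Function.Injective pickF := by
    intro y z h
    have h5 := congrArg cols h
    rw [hpick_eq, hpick_eq] at h5
    exact Subtype.ext h5
  let I : Finset (Fin D) := Finset.univ.image pickF
  have hIcard : I.card = k := by
    rw [Finset.card_image_of_injective _ pick_inj, Finset.card_univ, hcard]
  let ι : Fin k → Fin D := fun j => (I.orderIsoOfFin hIcard j : Fin D)
  have hmono : StrictMono ι := fun a b hab => (I.orderIsoOfFin hIcard).strictMono hab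
  -- cols ∘ ι is linearly independent
  have hcols_mem : ∀ j, cols (ι j) ∈ s := by
    intro j
    have : ι j ∈ I := (I.orderIsoOfFin hIcard j).2
    obtain ⟨y, _, hy⟩ := Finset.mem_image.mp this
    rw [← hy, hpick_eq]
    exact y.2
  let g : Fin k → ↥s := fun j => ⟨cols (ι j), hcols_mem j⟩
  have g_inj : Function.Injective g := by
    intro j j' h
    have h1 : cols (ι j) = cols (ι j') := congrArg Subtype.val h
    -- ι j = pickF y for some y; cols determines y
    have hj : ι j ∈ I := (I.orderIsoOfFin hIcard j).2
    have hj' : ι j' ∈ I := (I.orderIsoOfFin hIcard j').2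
    obtain ⟨y, _, hy⟩ := Finset.mem_image.mp hj
    obtain ⟨y', _, hy'⟩ := Finset.mem_image.mp hj'
    have : y = y' := by
      apply Subtype.ext
      have e1 : cols (ι j) = y.1 := by rw [← hy, hpick_eq]
      have e2 : cols (ι j') = y'.1 := by rw [← hy', hpick_eq]
      rw [← e1, ← e2, h1]
    have : ι j = ι j' := by rw [← hy, ← hy', this]
    exact hmono.injective this
  have li_sel : LinearIndependent ℚ (fun j => cols (ι j)) := by
    exact LinearIndependent.comp hs_li g g_inj
  refine ⟨ι, hmono, ?_⟩
  intro a ha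
  by_contra hcon
  push_neg at hcon
  -- then ∑ (a j : ℚ) • cols (ι j) = 0
  have hzero : ∑ j, (a j : ℚ) • cols (ι j) = 0 := by
    funext t
    simp only [Finset.sum_apply, Pi.smul_apply, smul_eq_mul, Pi.zero_apply]
    have hx := hcon ((b t : ↥M) : Fin D → ℤ) (b t).2
    have h4 : ((∑ j, a j * ((b t : ↥M) : Fin D → ℤ) (ι j) : ℤ) : ℚ) = 0 := by
      rw [hx]; norm_cast
    push_cast at h4
    calc ∑ j, (a j : ℚ) * cols (ι j) t
        = ∑ j, (a j : ℚ) * ((((b t : ↥M) : Fin D → ℤ) (ι j) : ℤ) : ℚ) := by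
          refine Finset.sum_congr rfl fun j _ => ?_
          simp only [cols, β, castL_apply]
      _ = 0 := h4
  have := (Fintype.linearIndependent_iff.mp li_sel) (fun j => (a j : ℚ)) hzero
  apply ha
  funext j
  have h := this j
  have h2 : ((a j : ℚ)) = 0 := h
  exact_mod_cast h2


theorem stmt0 (D k : ℕ) (hD : 1 ≤ D) (hkD : k ≤ D)
    (V : Set (Fin D → ℤ)) (hV : IsAffineSublatticeOfRank D k V) :
    ∃ ι : Fin k → Fin D, StrictMono ι ∧
      ∀ P : AddMonoidAlgebra ℚ (Fin (k + 1) → ℤ), P ≠ 0 →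
        ∃ (m : ℕ) (Wfam : Fin m → Set (Fin D → ℤ)),
          (∀ t, Wfam t ⊆ V ∧ ∃ r, r < k ∧ IsAffineSublatticeOfRank D r (Wfam t)) ∧
          ∀ c ∈ V, (∀ t, c ∉ Wfam t) →
            laurentSubst P (fun j => c (ι j)) ≠ 0 := by
  classical
  obtain ⟨v, L, hrank, hVeq⟩ := hV
  set M : Submodule ℤ (Fin D → ℤ) := AddSubgroup.toIntSubmodule L with hM
  obtain ⟨ι, hmono, hι⟩ := chooseIota M hrank
  refine ⟨ι, hmono, ?_⟩
  intro P hP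
  -- the affine condition associated to a pair of exponents
  let cond : ((Fin (k+1) → ℤ) × (Fin (k+1) → ℤ)) → (Fin D → ℤ) → Prop := fun p c =>
    (p.1 - p.2) 0 + ∑ j, (p.1 - p.2) j.succ * c (ι j) = 0
  let goodPairs : Finset ((Fin (k+1) → ℤ) × (Fin (k+1) → ℤ)) :=
    (P.coeff.support ×ˢ P.coeff.support).filter
      (fun p => (fun j => (p.1 - p.2) j.succ) ≠ (0 : Fin k → ℤ) ∧ {c | c ∈ V ∧ cond p c}.Nonempty)
  let en : Fin goodPairs.card ≃ ↥goodPairs := goodPairs.equivFin.symm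
  refine ⟨goodPairs.card, fun t => {c | c ∈ V ∧ cond (en t : _ × _) c}, ?_, ?_⟩
  · -- each piece is a sublattice of smaller rank
    intro t
    obtain ⟨hmemprod, ha, hne⟩ := Finset.mem_filter.mp (en t).2
    set p := ((en t : _ × _) : (Fin (k+1) → ℤ) × (Fin (k+1) → ℤ)) with hp
    set d : Fin (k+1) → ℤ := p.1 - p.2 with hd
    set a : Fin k → ℤ := fun j => d j.succ with hA
    have haz : a ≠ 0 := ha
    refine ⟨fun c hc => hc.1, ?_⟩
    let F : (Fin D → ℤ) →ₗ[ℤ] ℤ :=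
      { toFun := fun x => ∑ j, a j * x (ι j)
        map_add' := by intro x y; simp [mul_add, Finset.sum_add_distrib]
        map_smul' := by intro cc x; simp [smul_eq_mul, Finset.mul_sum, mul_left_comm] }
    have hFapp : ∀ x, F x = ∑ j, a j * x (ι j) := fun x => rfl
    obtain ⟨x1, hx1M, hx1F⟩ := hι a haz
    have hrk : Module.finrank ℤ ↥(M ⊓ LinearMap.ker F) < k := by
      refine rankKer M hrank F x1 hx1M ?_
      rw [hFapp]; exact hx1F
    obtain ⟨c0, hc0V, hc0cond⟩ := hne
    have hc0V' := hc0V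
    rw [hVeq] at hc0V'
    obtain ⟨x0, hx0L, hc0eq⟩ := hc0V'
    have hx0M : x0 ∈ M := hx0L
    refine ⟨Module.finrank ℤ ↥(AddSubgroup.toIntSubmodule (M ⊓ LinearMap.ker F).toAddSubgroup),
      ?_, c0, (M ⊓ LinearMap.ker F).toAddSubgroup, rfl, ?_⟩
    · rw [Submodule.toAddSubgroup_toIntSubmodule]; exact hrk
    · -- the set is the coset c0 + (M ⊓ ker F)
      ext c
      simp only [Set.mem_setOf_eq, Set.mem_image, SetLike.mem_coe, Submodule.mem_toAddSubgroup,
        Submodule.mem_inf, LinearMap.mem_ker]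
      constructor
      · rintro ⟨hcV, hcond⟩
        have hcV' := hcV
        rw [hVeq] at hcV'
        obtain ⟨x, hxL, hceq⟩ := hcV'
        have hxM : x ∈ M := hxL
        refine ⟨x - x0, ⟨sub_mem hxM hx0M, ?_⟩, ?_⟩
        · -- F (x - x0) = 0
          have h1 : d 0 + F c = 0 := by rw [hFapp]; exact hcond
          have h2 : d 0 + F c0 = 0 := by rw [hFapp]; exact hc0cond
          have h3 : F c = F c0 := by omega
          have h4 : c - c0 = x - x0 := by rw [← hceq, ← hc0eq]; beta_reduce; abel
          rw [← h4, map_sub, h3, sub_self]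
        · rw [← hc0eq, ← hceq]; beta_reduce; abel
      · rintro ⟨y, ⟨hyM, hyF⟩, hcy⟩
        have hyL : y ∈ L := hyM
        constructor
        · rw [hVeq]
          exact ⟨x0 + y, add_mem hx0L hyL, by rw [← hcy, ← hc0eq]; beta_reduce; abel⟩
        · show d 0 + ∑ j, d j.succ * c (ι j) = 0
          have : (∑ j, d j.succ * c (ι j)) = F c := (hFapp c).symm
          rw [this, ← hcy, map_add, hyF, add_zero, hFapp]
          exact hc0cond
  · -- non-vanishing away from the pieces
    intro c hcV hcW
    set e : (Fin (k+1) → ℤ) → ℤ := fun m => m 0 + ∑ j, m j.succ * c (ι j) with he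
    have hinj : Set.InjOn e ↑P.coeff.support := by
      intro m1 h1 m2 h2 hee
      by_contra hne12
      set d : Fin (k+1) → ℤ := m1 - m2 with hd
      set a : Fin k → ℤ := fun j => d j.succ with hA
      have hcond : d 0 + ∑ j, a j * c (ι j) = 0 := by
        have hdiff : e m1 - e m2 = d 0 + ∑ j, a j * c (ι j) := by
          simp only [he, hd, hA, Pi.sub_apply, sub_mul, Finset.sum_sub_distrib]
          ring
        rw [hee, sub_self] at hdiff
        omega
      by_cases ha : a = 0
      · have hd0 : d 0 = 0 := by
          have : (∑ j, a j * c (ι j)) = 0 := by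
            refine Finset.sum_eq_zero fun j _ => ?_
            rw [show a j = 0 from congrFun ha j, zero_mul]
          omega
        apply hne12
        have : d = 0 := by
          funext i
          refine Fin.cases hd0 (fun j => congrFun ha j) i
        have := sub_eq_zero.mp (show m1 - m2 = 0 from this)
        exact this
      · have hmem : (m1, m2) ∈ goodPairs := by
          refine Finset.mem_filter.mpr ⟨Finset.mem_product.mpr ⟨h1, h2⟩, ha, ⟨c, hcV, hcond⟩⟩
        have hcontra := hcW (en.symm ⟨(m1, m2), hmem⟩)
        apply hcontra
        refine Set.mem_setOf_eq ▸ ?_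
        rw [Equiv.apply_symm_apply]
        exact ⟨hcV, hcond⟩
    obtain ⟨m0, hm0⟩ := Finsupp.support_nonempty_iff.mpr (fun h => hP (AddMonoidAlgebra.coeff_eq_zero.mp h))
    have happ : Finsupp.mapDomain e P.coeff (e m0) = P.coeff m0 :=
      Finsupp.mapDomain_apply' ↑P.coeff.support P.coeff subset_rfl hinj hm0
    intro h0
    have h0' : Finsupp.mapDomain e P.coeff = 0 := congrArg AddMonoidAlgebra.coeff h0
    rw [h0'] at happ
    simp only [Finsupp.coe_zero, Pi.zero_apply] at happ
    exact Finsupp.mem_support_iff.mp hm0 happ.symm
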